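/- Let Λ > 0. For every A > 0 and Q > 0 there exists a unique ∈ (0, π²/√(2Λ³)] such that, setting Q̂ = (Q/A)·Â, equality holds in Q̂² = (12/(64π²))·(Âπ/2)^{4/3} − 3ΛÂ²/(32π²). Moreover, the inequality Q² ≤ (12/(64π²))·(Aπ/2)^{4/3} − 3ΛA²/(32π²) holds if and only if A ≤ Â. -/

import Mathlib

open Real

/-- Lemma 7.1(b): existence and uniqueness of `Â ∈ (0, π²/√(2Λ³)]` saturating the
area–charge relation along the curve `τ ↦ (τ, Qτ/A)`, and the inequality holds iff `A ≤ Â`. -/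
theorem stmt1 (Λ A Q : ℝ) (hΛ : 0 < Λ) (hA : 0 < A) (hQ : 0 < Q) :
    ∃ Ahat : ℝ, (0 < Ahat ∧ Ahat ≤ π ^ 2 / Real.sqrt (2 * Λ ^ 3)) ∧
      (Q / A * Ahat) ^ 2 =
        12 / (64 * π ^ 2) * (Ahat * π / 2) ^ ((4 : ℝ) / 3) - 3 * Λ * Ahat ^ 2 / (32 * π ^ 2) ∧
      (∀ A' : ℝ, 0 < A' → A' ≤ π ^ 2 / Real.sqrt (2 * Λ ^ 3) →
        (Q / A * A') ^ 2 =
          12 / (64 * π ^ 2) * (A' * π / 2) ^ ((4 : ℝ) / 3) - 3 * Λ * A' ^ 2 / (32 * π ^ 2) →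
        A' = Ahat) ∧
      (Q ^ 2 ≤ 12 / (64 * π ^ 2) * (A * π / 2) ^ ((4 : ℝ) / 3) - 3 * Λ * A ^ 2 / (32 * π ^ 2) ↔
        A ≤ Ahat) := by
  have hπ : 0 < π := pi_pos
  set q : ℝ := Q / A with hq_def
  have hq : 0 < q := div_pos hQ hA
  set p : ℝ := (π / 2) ^ ((4 : ℝ) / 3) with hp_def
  have hp : 0 < p := Real.rpow_pos_of_pos (by positivity) _
  have hp3 : p ^ 3 = (π / 2) ^ 4 := by
    rw [hp_def, ← Real.rpow_natCast ((π / 2) ^ ((4 : ℝ) / 3)) 3, ← Real.rpow_mul (by positivity),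
      ← Real.rpow_natCast (π / 2) 4]
    norm_num
  set c : ℝ := 12 / (64 * π ^ 2) * p with hc_def
  set d : ℝ := 3 * Λ / (32 * π ^ 2) with hd_def
  have hc : 0 < c := by positivity
  have hd : 0 < d := by positivity
  have hqd : 0 < q ^ 2 + d := by positivity
  set r : ℝ := c / (q ^ 2 + d) with hr_def
  have hr : 0 < r := by positivity
  set Ahat : ℝ := r ^ ((3 : ℝ) / 2) with hAhat_def
  have hAhatpos : 0 < Ahat := Real.rpow_pos_of_pos hr _
  -- rewrite the RHS of the relation
  have key : ∀ x : ℝ, 0 < x →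
      12 / (64 * π ^ 2) * (x * π / 2) ^ ((4 : ℝ) / 3) - 3 * Λ * x ^ 2 / (32 * π ^ 2)
        = c * x ^ ((4 : ℝ) / 3) - d * x ^ 2 := by
    intro x hx
    have h1 : (x * π / 2 : ℝ) = x * (π / 2) := by ring
    rw [h1, Real.mul_rpow hx.le (by positivity), hc_def, hd_def, hp_def]
    ring
  have pow_split : ∀ x : ℝ, 0 < x →
      ((q ^ 2 + d) * x ^ ((2 : ℝ) / 3)) * x ^ ((4 : ℝ) / 3) = (q ^ 2 + d) * x ^ 2 := by
    intro x hx
    have : x ^ ((2 : ℝ) / 3) * x ^ ((4 : ℝ) / 3) = x ^ 2 := by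
      rw [← Real.rpow_add hx, ← Real.rpow_natCast x 2]
      norm_num
    rw [mul_assoc, this]
  have back : ∀ x : ℝ, 0 < x → (x ^ ((2 : ℝ) / 3)) ^ ((3 : ℝ) / 2) = x := by
    intro x hx
    rw [← Real.rpow_mul hx.le]
    norm_num
  have forth : (Ahat) ^ ((2 : ℝ) / 3) = r := by
    rw [hAhat_def, ← Real.rpow_mul hr.le]
    norm_num
  -- the ≤ characterization
  have key_le : ∀ x : ℝ, 0 < x →
      ((q * x) ^ 2 ≤ 12 / (64 * π ^ 2) * (x * π / 2) ^ ((4 : ℝ) / 3)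
          - 3 * Λ * x ^ 2 / (32 * π ^ 2) ↔ x ≤ Ahat) := by
    intro x hx
    have h43 : 0 < x ^ ((4 : ℝ) / 3) := Real.rpow_pos_of_pos hx _
    rw [key x hx]
    constructor
    · intro h
      have h2 : ((q ^ 2 + d) * x ^ ((2 : ℝ) / 3)) * x ^ ((4 : ℝ) / 3) ≤ c * x ^ ((4 : ℝ) / 3) := by
        rw [pow_split x hx]; have hmx : (q * x) ^ 2 = q ^ 2 * x ^ 2 := by ring
        linarith
      have h3 : (q ^ 2 + d) * x ^ ((2 : ℝ) / 3) ≤ c := le_of_mul_le_mul_right h2 h43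
      have h4 : x ^ ((2 : ℝ) / 3) ≤ r := by
        rw [hr_def, le_div_iff₀ hqd]; linarith [h3]
      calc x = (x ^ ((2 : ℝ) / 3)) ^ ((3 : ℝ) / 2) := (back x hx).symm
        _ ≤ r ^ ((3 : ℝ) / 2) := Real.rpow_le_rpow (by positivity) h4 (by norm_num)
        _ = Ahat := rfl
    · intro h
      have h4 : x ^ ((2 : ℝ) / 3) ≤ r := by
        calc x ^ ((2 : ℝ) / 3) ≤ Ahat ^ ((2 : ℝ) / 3) :=
              Real.rpow_le_rpow hx.le h (by norm_num)
          _ = r := forth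
      have h3 : (q ^ 2 + d) * x ^ ((2 : ℝ) / 3) ≤ c := by
        rw [hr_def, le_div_iff₀ hqd] at h4; linarith
      have h2 : ((q ^ 2 + d) * x ^ ((2 : ℝ) / 3)) * x ^ ((4 : ℝ) / 3) ≤ c * x ^ ((4 : ℝ) / 3) :=
        mul_le_mul_of_nonneg_right h3 h43.le
      rw [pow_split x hx] at h2
      have hmx : (q * x) ^ 2 = q ^ 2 * x ^ 2 := by ring
      linarith
  -- the = characterization
  have key_eq : ∀ x : ℝ, 0 < x →
      ((q * x) ^ 2 = 12 / (64 * π ^ 2) * (x * π / 2) ^ ((4 : ℝ) / 3)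
          - 3 * Λ * x ^ 2 / (32 * π ^ 2) ↔ x = Ahat) := by
    intro x hx
    have h43 : 0 < x ^ ((4 : ℝ) / 3) := Real.rpow_pos_of_pos hx _
    rw [key x hx]
    constructor
    · intro h
      have h2 : ((q ^ 2 + d) * x ^ ((2 : ℝ) / 3)) * x ^ ((4 : ℝ) / 3) = c * x ^ ((4 : ℝ) / 3) := by
        rw [pow_split x hx]; have hmx : (q * x) ^ 2 = q ^ 2 * x ^ 2 := by ring
        linarith
      have h3 : (q ^ 2 + d) * x ^ ((2 : ℝ) / 3) = c := mul_right_cancel₀ h43.ne' h2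
      have h4 : x ^ ((2 : ℝ) / 3) = r := by
        rw [hr_def, eq_div_iff hqd.ne']; linarith
      calc x = (x ^ ((2 : ℝ) / 3)) ^ ((3 : ℝ) / 2) := (back x hx).symm
        _ = r ^ ((3 : ℝ) / 2) := by rw [h4]
        _ = Ahat := rfl
    · intro h
      subst h
      have h4 : Ahat ^ ((2 : ℝ) / 3) = r := forth
      have h3 : (q ^ 2 + d) * Ahat ^ ((2 : ℝ) / 3) = c := by
        rw [h4, hr_def, mul_div_cancel₀ c hqd.ne']
      have h2 : ((q ^ 2 + d) * Ahat ^ ((2 : ℝ) / 3)) * Ahat ^ ((4 : ℝ) / 3)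
          = c * Ahat ^ ((4 : ℝ) / 3) := by rw [h3]
      rw [pow_split Ahat hAhatpos] at h2
      have hmx : (q * Ahat) ^ 2 = q ^ 2 * Ahat ^ 2 := by ring
      linarith
  -- the bound Ahat ≤ π²/√(2Λ³)
  have hbound : Ahat ≤ π ^ 2 / Real.sqrt (2 * Λ ^ 3) := by
    have hcd3 : (c / d) ^ 3 = π ^ 4 / (2 * Λ ^ 3) := by
      have hcd : c / d = 2 * p / Λ := by
        rw [hc_def, hd_def]; field_simp; ring
      rw [hcd, div_pow, mul_pow, hp3]
      field_simp
    have hcd_eq : (c / d) ^ ((3 : ℝ) / 2) = π ^ 2 / Real.sqrt (2 * Λ ^ 3) := by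
      have hL : 0 < (2 * Λ ^ 3 : ℝ) := by positivity
      have hLHS : 0 ≤ (c / d) ^ ((3 : ℝ) / 2) := (Real.rpow_pos_of_pos (by positivity) _).le
      have hRHS : 0 ≤ π ^ 2 / Real.sqrt (2 * Λ ^ 3) := by positivity
      have hsq : ((c / d) ^ ((3 : ℝ) / 2)) ^ 2 = (π ^ 2 / Real.sqrt (2 * Λ ^ 3)) ^ 2 := by
        have h1 : ((c / d) ^ ((3 : ℝ) / 2)) ^ 2 = (c / d) ^ 3 := by
          rw [← Real.rpow_natCast ((c / d) ^ ((3 : ℝ) / 2)) 2,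
            ← Real.rpow_mul (by positivity), ← Real.rpow_natCast (c / d) 3]
          norm_num
        have h2 : (π ^ 2 / Real.sqrt (2 * Λ ^ 3)) ^ 2 = π ^ 4 / (2 * Λ ^ 3) := by
          rw [div_pow, Real.sq_sqrt hL.le]
          ring_nf
        rw [h1, h2, hcd3]
      calc (c / d) ^ ((3 : ℝ) / 2)
          = Real.sqrt (((c / d) ^ ((3 : ℝ) / 2)) ^ 2) := (Real.sqrt_sq hLHS).symm
        _ = Real.sqrt ((π ^ 2 / Real.sqrt (2 * Λ ^ 3)) ^ 2) := by rw [hsq]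
        _ = π ^ 2 / Real.sqrt (2 * Λ ^ 3) := Real.sqrt_sq hRHS
    have hrle : r ≤ c / d := by
      rw [hr_def]
      gcongr
      linarith [sq_nonneg q]
    calc Ahat = r ^ ((3 : ℝ) / 2) := rfl
      _ ≤ (c / d) ^ ((3 : ℝ) / 2) := Real.rpow_le_rpow hr.le hrle (by norm_num)
      _ = π ^ 2 / Real.sqrt (2 * Λ ^ 3) := hcd_eq
  refine ⟨Ahat, ⟨hAhatpos, hbound⟩, ?_, ?_, ?_⟩
  · exact (key_eq Ahat hAhatpos).mpr rfl
  · intro A' hA' _ hEq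
    exact (key_eq A' hA').mp hEq
  · have hQA : q * A = Q := div_mul_cancel₀ Q hA.ne'
    have := key_le A hA
    rw [hQA] at this
    exact this
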